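/- Let U : A ⊗ B → C ⊗ D be a unitary between finite-dimensional Hilbert spaces. If the operator algebra U(L(A) ⊗ I_B)U† commutes with I_C ⊗ L(D), then for every unitary V on A there exists a unitary V' on C such that U(V ⊗ I_B)U† = V' ⊗ I_D. -/

import Mathlib

open Matrix Kronecker

lemma kron_one_conjTranspose {c d : Type*} [Fintype c] [Fintype d] [DecidableEq d]
    (V : Matrix c c ℂ) : (V ⊗ₖ (1 : Matrix d d ℂ))ᴴ = Vᴴ ⊗ₖ (1 : Matrix d d ℂ) := by
  ext ⟨i, k⟩ ⟨j, l⟩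
  simp [Matrix.conjTranspose_apply, Matrix.one_apply, apply_ite (star : ℂ → ℂ), eq_comm]

/-- If `U(L(A) ⊗ I_B)U†` commutes with `I_C ⊗ L(D)`, then for every unitary `V` on
`A` there is a unitary `V'` on `C` with `U (V ⊗ I_B) U† = V' ⊗ I_D`. -/
theorem stmt0 {a b c d : Type*} [Fintype a] [Fintype b] [Fintype c] [Fintype d]
    [DecidableEq a] [DecidableEq b] [DecidableEq c] [DecidableEq d]
    (U : Matrix (c × d) (a × b) ℂ)
    (hU1 : U * Uᴴ = 1) (hU2 : Uᴴ * U = 1)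
    (hcomm : ∀ (M : Matrix a a ℂ) (N : Matrix d d ℂ),
      Commute (U * (M ⊗ₖ (1 : Matrix b b ℂ)) * Uᴴ) ((1 : Matrix c c ℂ) ⊗ₖ N)) :
    ∀ V ∈ Matrix.unitaryGroup a ℂ, ∃ V' ∈ Matrix.unitaryGroup c ℂ,
      U * (V ⊗ₖ (1 : Matrix b b ℂ)) * Uᴴ = V' ⊗ₖ (1 : Matrix d d ℂ) := by
  intro V hV
  by_cases hd : Nonempty d
  case neg =>
    refine ⟨1, one_mem _, ?_⟩
    ext ⟨i, k⟩ ⟨j, l⟩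
    exact absurd ⟨k⟩ hd
  obtain ⟨d₀⟩ := hd
  set W : Matrix (c × d) (c × d) ℂ := U * (V ⊗ₖ (1 : Matrix b b ℂ)) * Uᴴ with hWdef
  -- Key entrywise relation from the commutation hypothesis
  have key : ∀ (i j : c) (k m n : d),
      W (i, k) (j, m) = if k = m then W (i, n) (j, n) else 0 := by
    intro i j k m n
    have h := hcomm V (Matrix.single m n 1)
    simp only [Commute, SemiconjBy] at h
    have h3 : (W * ((1 : Matrix c c ℂ) ⊗ₖ Matrix.single m n 1) : Matrix (c × d) (c × d) ℂ) (i, k) (j, n)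
        = (((1 : Matrix c c ℂ) ⊗ₖ Matrix.single m n 1) * W : Matrix (c × d) (c × d) ℂ) (i, k) (j, n) :=
      Matrix.ext_iff.mpr h (i, k) (j, n)
    have lhs : (W * ((1 : Matrix c c ℂ) ⊗ₖ Matrix.single m n 1) : Matrix (c × d) (c × d) ℂ) (i, k) (j, n)
        = W (i, k) (j, m) := by
      rw [Matrix.mul_apply]
      rw [Fintype.sum_prod_type]
      simp [Matrix.kroneckerMap_apply, Matrix.one_apply, Matrix.single,
        Finset.sum_ite_eq, ite_and, mul_comm]
    have rhs : (((1 : Matrix c c ℂ) ⊗ₖ Matrix.single m n 1) * W : Matrix (c × d) (c × d) ℂ) (i, k) (j, n)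
        = if k = m then W (i, n) (j, n) else 0 := by
      rw [Matrix.mul_apply]
      rw [Fintype.sum_prod_type]
      simp [Matrix.kroneckerMap_apply, Matrix.one_apply, Matrix.single,
        Finset.sum_ite_eq, ite_and, eq_comm]
    rw [lhs, rhs] at h3
    exact h3
  refine ⟨fun i j => W (i, d₀) (j, d₀), ?_, ?_⟩
  · -- unitarity
    have hWW : W * Wᴴ = 1 := by
      have hVk : (V ⊗ₖ (1 : Matrix b b ℂ)) * (V ⊗ₖ (1 : Matrix b b ℂ))ᴴ = 1 := by
        have hVV : V * Vᴴ = 1 := by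
          simpa [Matrix.star_eq_conjTranspose] using Matrix.mem_unitaryGroup_iff.mp hV
        rw [kron_one_conjTranspose, ← Matrix.mul_kronecker_mul, hVV, one_mul,
          Matrix.one_kronecker_one]
      calc W * Wᴴ = U * (V ⊗ₖ (1 : Matrix b b ℂ)) * (Uᴴ * U) * (V ⊗ₖ (1 : Matrix b b ℂ))ᴴ * Uᴴ := by
            simp [hWdef, Matrix.conjTranspose_mul, Matrix.mul_assoc]
        _ = 1 := by
            rw [hU2, Matrix.mul_one, Matrix.mul_assoc, Matrix.mul_assoc, ← Matrix.mul_assoc (V ⊗ₖ _),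
              hVk, Matrix.one_mul, hU1]
    refine Matrix.mem_unitaryGroup_iff.mpr ?_
    ext i j
    have := Matrix.ext_iff.mpr hWW (i, d₀) (j, d₀)
    simp only [Matrix.mul_apply, Fintype.sum_prod_type] at this ⊢
    have one_entry : (1 : Matrix (c × d) (c × d) ℂ) (i, d₀) (j, d₀)
        = (1 : Matrix c c ℂ) i j := by
      simp [Matrix.one_apply, Prod.ext_iff]
    rw [one_entry] at this
    rw [← this]
    refine Finset.sum_congr rfl fun p _ => ?_
    rw [Finset.sum_eq_single d₀]
    · simp [Matrix.conjTranspose_apply]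
      exact Or.inl rfl
    · intro q _ hq
      rw [key i p d₀ q d₀]
      simp [Ne.symm hq]
    · simp
  · -- equality
    ext ⟨i, k⟩ ⟨j, l⟩
    rw [key i j k l d₀]
    change _ = W (i, d₀) (j, d₀) * (1 : Matrix d d ℂ) k l
    simp [Matrix.kroneckerMap_apply, Matrix.one_apply]
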